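/- A normal λ-term has type N = ∀X{X, (X→X) → X} in the second-order propositional type system (system F) if and only if it is a Church numeral n̲ = λx λf (f)ⁿx for some natural number n. -/

import Mathlib

/- Untyped λ-calculus with de Bruijn indices, head reduction, Church numerals. -/

inductive Lam : Type
  | var : ℕ → Lam
  | app : Lam → Lam → Lam
  | lam : Lam → Lam
deriving DecidableEq, Repr

namespace Lam

/-- Shift free variables `≥ c` up by 1. -/
def lift (c : ℕ) : Lam → Lam
  | var n => if n < c then var n else var (n + 1)
  | app s t => app (s.lift c) (t.lift c)
  | lam t => lam (t.lift (c + 1))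

/-- Push a substitution under a binder. -/
def up (σ : ℕ → Lam) : ℕ → Lam
  | 0 => var 0
  | n + 1 => (σ n).lift 0

/-- Capture-avoiding simultaneous substitution. -/
def subst (σ : ℕ → Lam) : Lam → Lam
  | var n => σ n
  | app s t => app (s.subst σ) (t.subst σ)
  | lam t => lam (t.subst (up σ))

/-- `t.subst0 u` is `t[u/0]`, the β-contractum substitution. -/
def subst0 (t u : Lam) : Lam :=
  t.subst (fun n => match n with | 0 => u | n + 1 => var n)

/-- `m` occurs free in the term. -/
def FreeIn (m : ℕ) : Lam → Prop
  | var n => n = m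
  | app s t => s.FreeIn m ∨ t.FreeIn m
  | lam t => t.FreeIn (m + 1)

/-- A closed λ-term. -/
def Closed (t : Lam) : Prop := ∀ m, ¬ t.FreeIn m

end Lam

/-- One-step β-reduction (anywhere in the term). -/
inductive Beta : Lam → Lam → Prop
  | beta (t u) : Beta (.app (.lam t) u) (t.subst0 u)
  | appL {s s'} (t) : Beta s s' → Beta (.app s t) (.app s' t)
  | appR {t t'} (s) : Beta t t' → Beta (.app s t) (.app s t')
  | lam {t t'} : Beta t t' → Beta (.lam t) (.lam t')

/-- β-equivalence `≃β`. -/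
def BetaEq : Lam → Lam → Prop := Relation.EqvGen Beta

/-- A term in (β-)normal form. -/
def NormalForm (t : Lam) : Prop := ∀ u, ¬ Beta t u

/-- One step of head reduction: reduce the head redex. -/
inductive HStep : Lam → Lam → Prop
  | beta (t u) : HStep (.app (.lam t) u) (t.subst0 u)
  | lam {t t'} : HStep t t' → HStep (.lam t) (.lam t')
  | app {t t'} (u) : HStep t t' → (∀ s, t ≠ .lam s) → HStep (.app t u) (.app t' u)

/-- `HRedN k u v` : `u ≻ v` by a head reduction of length `h(u,v) = k`. -/
inductive HRedN : ℕ → Lam → Lam → Prop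
  | refl (t) : HRedN 0 t t
  | step {k t u v} : HStep t u → HRedN k u v → HRedN (k + 1) t v

/-- `u ≻ v` : `v` is obtained from `u` by head reduction. -/
def HRed (t u : Lam) : Prop := ∃ k, HRedN k t u

/-- Head normal form: no head redex. -/
def HeadNormal (t : Lam) : Prop := ∀ u, ¬ HStep t u

/-- Solvable: the head reduction terminates. -/
def Solvable (t : Lam) : Prop := ∃ v, HRed t v ∧ HeadNormal v

/-- `(t)u₁…uₙ` : iterated application. -/
def appList : Lam → List Lam → Lam
  | t, [] => t
  | t, u :: us => appList (t.app u) us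

/-- `(f)ⁿ x` with `x = var 1`, `f = var 0`. -/
def churchBody : ℕ → Lam
  | 0 => .var 1
  | n + 1 => .app (.var 0) (churchBody n)

/-- Church numeral `n̲ = λx λf (f)ⁿ x`. -/
def church (n : ℕ) : Lam := .lam (.lam (churchBody n))

/-- `0̲ = λx λf x`. -/
def czero : Lam := .lam (.lam (.var 1))

/-- `s̲ = λn λx λf (f)((n)x)f`. -/
def csucc : Lam := .lam (.lam (.lam (.app (.var 0) (.app (.app (.var 2) (.var 1)) (.var 0)))))

/-- `(s̲)ⁿ 0̲`. -/
def succIter : ℕ → Lam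
  | 0 => czero
  | n + 1 => .app csucc (succIter n)

/-- `G = λx λy (x) λz (y)(s̲)z`. -/
def Gop : Lam := .lam (.lam (.app (.var 1) (.lam (.app (.var 1) (.app csucc (.var 0))))))

/-- `δ = λf (f)0̲`. -/
def deltaOp : Lam := .lam (.app (.var 0) czero)

/-- `T₁ = λn ((n)δ)G`. -/
def T1 : Lam := .lam (.app (.app (.var 0) deltaOp) Gop)

/-- `F = λx λy (x)(s̲)y`. -/
def Fop : Lam := .lam (.lam (.app (.var 1) (.app csucc (.var 0))))

/-- `T₂ = λn λf (((n)f)F)0̲`. -/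
def T2 : Lam := .lam (.lam (.app (.app (.app (.var 1) (.var 0)) Fop) czero))

/-- `θ₀ = λx λf λz (x)(λd z)(λx x)`. -/
def theta0 : Lam := .lam (.lam (.lam (.app (.app (.var 2) (.lam (.var 1))) (.lam (.var 0)))))

/-- `T` is a storage operator for the integers (the fixed variable `f` is `var 0`). -/
def IsStorage (T : Lam) : Prop :=
  ∀ n : ℕ, ∃ τ : Lam, BetaEq τ (church n) ∧
    ∀ θ : Lam, BetaEq θ (church n) →
      ∃ σ : ℕ → Lam, HRed (.app (.app T θ) (.var 0)) (.app (.var 0) (τ.subst σ))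

/- The propositional (second-order) type systems F and F⊥. -/

/-- Propositional types: named propositional variables `(b, X)` with
`b = true` marking ⊥-variables. -/
inductive PTy : Type
  | pv (b : Bool) (X : ℕ)
  | arr (A B : PTy)
  | all (b : Bool) (X : ℕ) (A : PTy)
deriving DecidableEq

/-- `⊥ := ∀X X`. -/
def botP : PTy := .all false 0 (.pv false 0)

/-- `¬A := A → ⊥`. -/
def negP (A : PTy) : PTy := A.arr botP

namespace PTy

/-- The variable `(b, X)` occurs free. -/
def fv (b : Bool) (X : ℕ) : PTy → Prop
  | pv b' X' => b = b' ∧ X = X'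
  | arr A B => A.fv b X ∨ B.fv b X
  | all b' X' A => ¬(b = b' ∧ X = X') ∧ A.fv b X

/-- `A[G/X]` : substitute `G` for the propositional variable `(b, X)`. -/
def substT (b : Bool) (X : ℕ) (G : PTy) : PTy → PTy
  | pv b' X' => if b = b' ∧ X = X' then G else pv b' X'
  | arr A B => arr (substT b X G A) (substT b X G B)
  | all b' X' A =>
      if b = b' ∧ X = X' then all b' X' A else all b' X' (substT b X G A)

end PTy

/-- ⊥-types: types whose final target is `⊥` or an atom `X_⊥`. -/
inductive IsBotP : PTy → Prop
  | bot : IsBotP botP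
  | pv (X) : IsBotP (.pv true X)
  | arr (A) {B} : IsBotP B → IsBotP (.arr A B)
  | all (b X) {A} : IsBotP A → IsBotP (.all b X A)

/-- Typing in system F (`strict = false`) and in its extension F⊥
(`strict = true`, where ⊥-variables may only be instantiated by ⊥-types). -/
inductive PDer (strict : Bool) : List PTy → Lam → PTy → Prop
  | var (Γ n A) : Γ[n]? = some A → PDer strict Γ (.var n) A
  | lamI {Γ A t B} : PDer strict (A :: Γ) t B → PDer strict Γ (.lam t) (.arr A B)
  | appE {Γ u v A B} : PDer strict Γ u (.arr A B) → PDer strict Γ v A →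
      PDer strict Γ (.app u v) B
  | allI {Γ t A} (b X) : PDer strict Γ t A → (∀ B ∈ Γ, ¬ B.fv b X) →
      PDer strict Γ t (.all b X A)
  | allE {Γ t b X A} (G) : PDer strict Γ t (.all b X A) →
      (strict = true → b = true → IsBotP G) → PDer strict Γ t (PTy.substT b X G A)

/-- `N = ∀X{X, (X→X) → X}`. -/
def Npty : PTy :=
  .all false 0 ((PTy.pv false 0).arr (((PTy.pv false 0).arr (.pv false 0)).arr (.pv false 0)))

/-- `N^⊥ = ∀X_⊥{X_⊥, (X_⊥→X_⊥) → X_⊥}`. -/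
def NbotP : PTy :=
  .all true 0 ((PTy.pv true 0).arr (((PTy.pv true 0).arr (.pv true 0)).arr (.pv true 0)))

/-- The instantiation preorder `⊴` of F⊥: least reflexive transitive relation
with `∀X A ⊴ A[G/X]` (`G` a ⊥-type when `X` is a ⊥-variable). -/
inductive InstLe : PTy → PTy → Prop
  | refl (A) : InstLe A A
  | trans {A B C} : InstLe A B → InstLe B C → InstLe A C
  | all {b X A} (G) : (b = true → IsBotP G) → InstLe (.all b X A) (PTy.substT b X G A)


/-! ### Auxiliary development for the characterization of normal terms of type `N` -/

namespace ChurchAux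

abbrev Op := Bool × ℕ × PTy

/-- Apply a list of type substitutions, left to right. -/
def applyOps (π : List Op) (C : PTy) : PTy :=
  π.foldl (fun D o => PTy.substT o.1 o.2.1 o.2.2 D) C

/-- Prefix a type with a list of quantifiers. -/
def mkAll (L : List (Bool × ℕ)) (C : PTy) : PTy :=
  L.foldr (fun p D => PTy.all p.1 p.2 D) C

def Fresh (Γ : List PTy) (b : Bool) (m : ℕ) : Prop := ∀ B ∈ Γ, ¬ B.fv b m

/-- One step of the "reachability" relation on derivable types. -/
inductive RStep (Γ : List PTy) : PTy → PTy → Prop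
  | inst (b m G A) : RStep Γ (.all b m A) (PTy.substT b m G A)
  | gen (b m A) : Fresh Γ b m → RStep Γ A (.all b m A)

def Reach (Γ : List PTy) : PTy → PTy → Prop := Relation.ReflTransGen (RStep Γ)

/-- Combined generation (inversion) lemma for the typing judgement. -/
theorem pder_inv {s : Bool} {Γ t C} (h : PDer s Γ t C) :
    (∀ n, t = .var n → ∃ A, Γ[n]? = some A ∧ Reach Γ A C) ∧
    (∀ u v, t = .app u v →
      ∃ E B, PDer s Γ u (.arr E B) ∧ PDer s Γ v E ∧ Reach Γ B C) ∧
    (∀ w, t = .lam w → ∃ A B, PDer s (A :: Γ) w B ∧ Reach Γ (.arr A B) C) := by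
  induction h with
  | var Γ n A hA =>
      refine ⟨?_, ?_, ?_⟩
      · rintro n' h'
        injection h' with h''
        subst h''
        exact ⟨A, hA, Relation.ReflTransGen.refl⟩
      · rintro u v h; cases h
      · rintro w h; cases h
  | lamI h ih =>
      refine ⟨?_, ?_, ?_⟩
      · rintro n h'; cases h'
      · rintro u v h'; cases h'
      · rintro w h'
        cases h'
        exact ⟨_, _, h, Relation.ReflTransGen.refl⟩
  | appE hu hv ihu ihv =>
      refine ⟨?_, ?_, ?_⟩
      · rintro n h'; cases h'
      · rintro u v h'
        cases h'
        exact ⟨_, _, hu, hv, Relation.ReflTransGen.refl⟩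
      · rintro w h'; cases h'
  | allI b X h hfresh ih =>
      refine ⟨?_, ?_, ?_⟩
      · rintro n rfl
        obtain ⟨A, hA, hr⟩ := ih.1 n rfl
        exact ⟨A, hA, hr.tail (RStep.gen b X _ hfresh)⟩
      · rintro u v rfl
        obtain ⟨E, B, hu, hv, hr⟩ := ih.2.1 u v rfl
        exact ⟨E, B, hu, hv, hr.tail (RStep.gen b X _ hfresh)⟩
      · rintro w rfl
        obtain ⟨A, B, hw, hr⟩ := ih.2.2 w rfl
        exact ⟨A, B, hw, hr.tail (RStep.gen b X _ hfresh)⟩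
  | allE G h hcond ih =>
      refine ⟨?_, ?_, ?_⟩
      · rintro n rfl
        obtain ⟨A, hA, hr⟩ := ih.1 n rfl
        exact ⟨A, hA, hr.tail (RStep.inst _ _ G _)⟩
      · rintro u v rfl
        obtain ⟨E, B, hu, hv, hr⟩ := ih.2.1 u v rfl
        exact ⟨E, B, hu, hv, hr.tail (RStep.inst _ _ G _)⟩
      · rintro w rfl
        obtain ⟨A, B, hw, hr⟩ := ih.2.2 w rfl
        exact ⟨A, B, hw, hr.tail (RStep.inst _ _ G _)⟩

theorem inv_var {s Γ n C} (h : PDer s Γ (.var n) C) :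
    ∃ A, Γ[n]? = some A ∧ Reach Γ A C := (pder_inv h).1 n rfl

theorem inv_app {s Γ u v C} (h : PDer s Γ (.app u v) C) :
    ∃ E B, PDer s Γ u (.arr E B) ∧ PDer s Γ v E ∧ Reach Γ B C :=
  (pder_inv h).2.1 u v rfl

theorem inv_lam {s Γ w C} (h : PDer s Γ (.lam w) C) :
    ∃ A B, PDer s (A :: Γ) w B ∧ Reach Γ (.arr A B) C := (pder_inv h).2.2 w rfl

theorem substT_not_fv {b m G} : ∀ {C : PTy}, ¬ C.fv b m → PTy.substT b m G C = C
  | .pv b' m', h => by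
      simp only [PTy.fv] at h
      simp [PTy.substT, h]
  | .arr A B, h => by
      simp only [PTy.fv] at h
      push_neg at h
      simp [PTy.substT, substT_not_fv h.1, substT_not_fv h.2]
  | .all b' m' A, h => by
      simp only [PTy.fv] at h
      by_cases hc : b = b' ∧ m = m'
      · simp [PTy.substT, hc]
      · push_neg at h
        simp [PTy.substT, hc, substT_not_fv (h (by tauto))]

/-- Substitution through a quantifier prefix. -/
theorem substT_mkAll (b m : _) (G : PTy) :
    ∀ (L : List (Bool × ℕ)) (C : PTy),
      PTy.substT b m G (mkAll L C) = mkAll L C ∨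
      PTy.substT b m G (mkAll L C) = mkAll L (PTy.substT b m G C)
  | [], C => Or.inr rfl
  | (b₀, m₀) :: L, C => by
      by_cases hc : b = b₀ ∧ m = m₀
      · left
        simp [mkAll, PTy.substT, hc]
      · have := substT_mkAll b m G L C
        rcases this with h | h
        · left; simp [mkAll, PTy.substT, hc]; exact h
        · right; simp [mkAll, PTy.substT, hc]; exact h

theorem applyOps_append (π₁ π₂ : List Op) (C : PTy) :
    applyOps (π₁ ++ π₂) C = applyOps π₂ (applyOps π₁ C) := by
  simp [applyOps, List.foldl_append]

/-- Reachable types from an arrow type. -/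
theorem reach_arr {Γ A B D} (h : Reach Γ (.arr A B) D) :
    ∃ (π : List Op) (L : List (Bool × ℕ)),
      (∀ o ∈ π, Fresh Γ o.1 o.2.1) ∧ (∀ p ∈ L, Fresh Γ p.1 p.2) ∧
      D = mkAll L (.arr (applyOps π A) (applyOps π B)) := by
  induction h with
  | refl => exact ⟨[], [], by simp, by simp, rfl⟩
  | tail hr hstep ih =>
      obtain ⟨π, L, hπ, hL, hmid⟩ := ih
      cases hstep with
      | gen b m A₀ hf =>
          exact ⟨π, (b, m) :: L, hπ, by
            rintro p hp
            rcases List.mem_cons.1 hp with rfl | hp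
            · exact hf
            · exact hL p hp, by rw [hmid]; rfl⟩
      | inst b m G A₀ =>
          cases L with
          | nil => exact absurd hmid.symm (by simp [mkAll])
          | cons p L' =>
              obtain ⟨hb, hm, hA₀⟩ : p.1 = b ∧ p.2 = m ∧
                  mkAll L' (.arr (applyOps π A) (applyOps π B)) = A₀ := by
                have : PTy.all b m A₀
                    = PTy.all p.1 p.2 (mkAll L' (.arr (applyOps π A) (applyOps π B))) := hmid
                injection this with h1 h2 h3
                exact ⟨h1.symm, h2.symm, h3.symm⟩
              subst hA₀
              rcases substT_mkAll b m G L' (.arr (applyOps π A) (applyOps π B)) with h | h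
              · exact ⟨π, L', hπ, fun p hp => hL p (List.mem_cons_of_mem _ hp), h⟩
              · refine ⟨π ++ [(b, m, G)], L', ?_, fun q hq => hL q (List.mem_cons_of_mem _ hq), ?_⟩
                · intro o ho
                  rcases List.mem_append.1 ho with ho | ho
                  · exact hπ o ho
                  · simp at ho
                    subst ho
                    have := hL p (List.mem_cons_self)
                    rwa [hb, hm] at this
                · rw [h]
                  simp [applyOps_append, applyOps, PTy.substT]

/-- Reachable types from a propositional variable free in the context. -/
theorem reach_pv {Γ b₁ m₁ D} (hfree : ∃ B ∈ Γ, B.fv b₁ m₁)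
    (h : Reach Γ (.pv b₁ m₁) D) :
    ∃ L : List (Bool × ℕ), (∀ p ∈ L, Fresh Γ p.1 p.2) ∧ D = mkAll L (.pv b₁ m₁) := by
  induction h with
  | refl => exact ⟨[], by simp, rfl⟩
  | tail hr hstep ih =>
      obtain ⟨L, hL, hmid⟩ := ih
      cases hstep with
      | gen b m A₀ hf =>
          exact ⟨(b, m) :: L, by
            rintro p hp
            rcases List.mem_cons.1 hp with rfl | hp
            · exact hf
            · exact hL p hp, by rw [hmid]; rfl⟩
      | inst b m G A₀ =>
          cases L with
          | nil => exact absurd hmid.symm (by simp [mkAll])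
          | cons p L' =>
              obtain ⟨hb, hm, hA₀⟩ : p.1 = b ∧ p.2 = m ∧ mkAll L' (.pv b₁ m₁) = A₀ := by
                have : PTy.all b m A₀ = PTy.all p.1 p.2 (mkAll L' (.pv b₁ m₁)) := hmid
                injection this with h1 h2 h3
                exact ⟨h1.symm, h2.symm, h3.symm⟩
              subst hA₀
              have hne : ¬ (b = b₁ ∧ m = m₁) := by
                rintro ⟨rfl, rfl⟩
                obtain ⟨B, hB, hBfv⟩ := hfree
                have := hL p (List.mem_cons_self) B hB
                rw [hb, hm] at this
                exact this hBfv
              have hL' : ∀ q ∈ L', Fresh Γ q.1 q.2 :=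
                fun q hq => hL q (List.mem_cons_of_mem _ hq)
              rcases substT_mkAll b m G L' (.pv b₁ m₁) with h | h
              · exact ⟨L', hL', h⟩
              · refine ⟨L', hL', ?_⟩
                rw [h]
                simp [PTy.substT, hne]

theorem applyOps_arr (π : List Op) : ∀ A B : PTy,
    applyOps π (.arr A B) = .arr (applyOps π A) (applyOps π B) := by
  induction π with
  | nil => intro A B; rfl
  | cons o π ih =>
      intro A B
      show applyOps π (PTy.substT o.1 o.2.1 o.2.2 (.arr A B)) = _
      rw [show PTy.substT o.1 o.2.1 o.2.2 (.arr A B)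
            = .arr (PTy.substT o.1 o.2.1 o.2.2 A) (PTy.substT o.1 o.2.1 o.2.2 B) from rfl,
          ih]
      rfl

theorem applyOps_all (π : List Op) : ∀ (b : Bool) (m : ℕ) (A : PTy),
    ∃ A', applyOps π (.all b m A) = .all b m A' := by
  induction π with
  | nil => intro b m A; exact ⟨A, rfl⟩
  | cons o π ih =>
      intro b m A
      show ∃ A', applyOps π (PTy.substT o.1 o.2.1 o.2.2 (.all b m A)) = _
      by_cases hc : o.1 = b ∧ o.2.1 = m
      · rw [show PTy.substT o.1 o.2.1 o.2.2 (.all b m A) = .all b m A by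
          simp [PTy.substT, hc]]
        exact ih b m A
      · rw [show PTy.substT o.1 o.2.1 o.2.2 (.all b m A)
            = .all b m (PTy.substT o.1 o.2.1 o.2.2 A) by simp [PTy.substT, hc]]
        exact ih b m _

theorem pv_of_applyOps_pv {π : List Op} {C : PTy} {b m}
    (h : applyOps π C = .pv b m) : ∃ b' m', C = .pv b' m' := by
  match C with
  | .pv b' m' => exact ⟨b', m', rfl⟩
  | .arr A B => rw [applyOps_arr] at h; cases h
  | .all b' m' A =>
      obtain ⟨A', hA'⟩ := applyOps_all π b' m' A
      rw [hA'] at h; cases h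

theorem applyOps_id {π : List Op} {C : PTy}
    (h : ∀ o ∈ π, ¬ C.fv o.1 o.2.1) : applyOps π C = C := by
  induction π with
  | nil => rfl
  | cons o π ih =>
      show applyOps π (PTy.substT o.1 o.2.1 o.2.2 C) = C
      rw [substT_not_fv (h o (List.mem_cons_self))]
      exact ih fun o' ho' => h o' (List.mem_cons_of_mem _ ho')

/-- From an arrow, only quantified arrows are reachable: never a `pv`. -/
theorem not_reach_arr_pv {Γ A B b m} : ¬ Reach Γ (.arr A B) (.pv b m) := by
  intro h
  obtain ⟨π, L, -, -, hEq⟩ := reach_arr h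
  cases L with
  | nil => cases hEq
  | cons p L' => cases hEq

/-- From a `pv` free in the context, no arrow is reachable. -/
theorem not_reach_pv_arr {Γ b m E B} (hfree : ∃ C ∈ Γ, C.fv b m) :
    ¬ Reach Γ (.pv b m) (.arr E B) := by
  intro h
  obtain ⟨L, -, hEq⟩ := reach_pv hfree h
  cases L with
  | nil => cases hEq
  | cons p L' => cases hEq

/-- From a `pv` free in the context, the only reachable `pv` is itself. -/
theorem reach_pv_pv {Γ b m b' m'} (hfree : ∃ C ∈ Γ, C.fv b m)
    (h : Reach Γ (.pv b m) (.pv b' m')) : b' = b ∧ m' = m := by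
  obtain ⟨L, -, hEq⟩ := reach_pv hfree h
  cases L with
  | nil => injection hEq with h1 h2; exact ⟨h1, h2⟩
  | cons p L' => cases hEq

/-- From an arrow, no reachable type is a `pv`. -/
theorem reach_arr_arr {Γ A B E F} (h : Reach Γ (.arr A B) (.arr E F)) :
    ∃ π : List Op, (∀ o ∈ π, Fresh Γ o.1 o.2.1) ∧
      E = applyOps π A ∧ F = applyOps π B := by
  obtain ⟨π, L, hπ, -, hEq⟩ := reach_arr h
  cases L with
  | nil => injection hEq with h1 h2; exact ⟨π, hπ, h1, h2⟩
  | cons p L' => cases hEq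

/-! ### Normal forms -/

theorem nf_lam {t : Lam} (h : NormalForm (.lam t)) : NormalForm t :=
  fun u hu => h (.lam u) (.lam hu)

theorem nf_app_left {s t : Lam} (h : NormalForm (.app s t)) : NormalForm s :=
  fun u hu => h (.app u t) (.appL t hu)

theorem nf_app_right {s t : Lam} (h : NormalForm (.app s t)) : NormalForm t :=
  fun u hu => h (.app s u) (.appR s hu)

theorem nf_app_not_lam {s t : Lam} (h : NormalForm (.app s t)) :
    ∀ w, s ≠ .lam w := by
  rintro w rfl
  exact h _ (Beta.beta w t)

/-! ### Neutral normal terms in the relevant contexts -/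

/-- No neutral term is typable in the empty context. -/
theorem neut_empty : ∀ (s : Lam), NormalForm s → (∀ w, s ≠ .lam w) →
    ∀ D, ¬ PDer false [] s D
  | .var n, _, _, D, h => by
      obtain ⟨A, hA, -⟩ := inv_var h
      simp at hA
  | .app s w, hnf, _, D, h => by
      obtain ⟨E, B, hs, -, -⟩ := inv_app h
      exact neut_empty s (nf_app_left hnf) (nf_app_not_lam hnf) _ hs
  | .lam w, _, hne, D, h => hne w rfl

/-- Neutral terms in a one-variable context `[pv b₁ m₁]`. -/
theorem neut_one {b₁ m₁} : ∀ (s : Lam), NormalForm s → (∀ w, s ≠ .lam w) →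
    ∀ D, PDer false [.pv b₁ m₁] s D →
      s = .var 0 ∧ Reach [PTy.pv b₁ m₁] (.pv b₁ m₁) D
  | .var n, _, _, D, h => by
      obtain ⟨A, hA, hr⟩ := inv_var h
      match n, hA with
      | 0, hA =>
          simp at hA
          subst hA
          exact ⟨rfl, hr⟩
  | .app s w, hnf, _, D, h => by
      obtain ⟨E, B, hs, -, -⟩ := inv_app h
      obtain ⟨-, hr⟩ := neut_one s (nf_app_left hnf) (nf_app_not_lam hnf) _ hs
      exact absurd hr (not_reach_pv_arr ⟨_, List.mem_singleton_self _, by simp [PTy.fv]⟩)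
  | .lam w, _, hne, D, h => absurd rfl (hne w)

section TwoCtx

variable {b₁ m₁ : ℕ} {A₂ : PTy}

end TwoCtx

/-- Neutral terms in the two-variable context `[A₂, pv b₁ m₁]`. -/
theorem neut_two {b₁ : Bool} {m₁ : ℕ} {A₂ : PTy}
    (hA₂ : (∃ b m, A₂ = .pv b m) ∨
      ∃ bp mp bq mq, A₂ = .arr (.pv bp mp) (.pv bq mq)) :
    ∀ (s : Lam), NormalForm s → (∀ w, s ≠ .lam w) →
    ∀ D, PDer false [A₂, .pv b₁ m₁] s D →
      (s = .var 0 ∧ Reach [A₂, .pv b₁ m₁] A₂ D) ∨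
      (s = .var 1 ∧ Reach [A₂, .pv b₁ m₁] (.pv b₁ m₁) D) ∨
      (∃ P Q u, A₂ = .arr P Q ∧ s = .app (.var 0) u ∧ NormalForm u ∧
        PDer false [A₂, .pv b₁ m₁] u P ∧ Reach [A₂, .pv b₁ m₁] Q D)
  | .var n, _, _, D, h => by
      obtain ⟨A, hA, hr⟩ := inv_var h
      match n, hA with
      | 0, hA => simp at hA; subst hA; exact Or.inl ⟨rfl, hr⟩
      | 1, hA => simp at hA; subst hA; exact Or.inr (Or.inl ⟨rfl, hr⟩)
  | .app s w, hnf, _, D, h => by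
      obtain ⟨E, B, hs, hw, hrD⟩ := inv_app h
      rcases neut_two hA₂ s (nf_app_left hnf) (nf_app_not_lam hnf) _ hs with
        ⟨rfl, hr⟩ | ⟨rfl, hr⟩ | ⟨P, Q, u, hA, rfl, -, -, hr⟩
      · -- s = var 0, Reach A₂ (arr E B)
        rcases hA₂ with ⟨b, m, rfl⟩ | ⟨bp, mp, bq, mq, rfl⟩
        · exact absurd hr (not_reach_pv_arr
            ⟨_, List.mem_cons_self, by simp [PTy.fv]⟩)
        · obtain ⟨π, hπ, hE, hB⟩ := reach_arr_arr hr
          have hfvP : (PTy.pv bp mp).fv bp mp := by simp [PTy.fv]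
          have hfvQ : (PTy.pv bq mq).fv bq mq := by simp [PTy.fv]
          have hEP : E = .pv bp mp := by
            rw [hE]
            refine applyOps_id fun o ho hfv => ?_
            have := hπ o ho _ (List.mem_cons_self)
            simp only [PTy.fv] at hfv this
            exact this (Or.inl (by rcases hfv with ⟨rfl, rfl⟩; simp [PTy.fv]))
          have hBQ : B = .pv bq mq := by
            rw [hB]
            refine applyOps_id fun o ho hfv => ?_
            have := hπ o ho _ (List.mem_cons_self)
            simp only [PTy.fv] at hfv this
            exact this (Or.inr (by rcases hfv with ⟨rfl, rfl⟩; simp [PTy.fv]))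
          subst hEP hBQ
          exact Or.inr (Or.inr ⟨_, _, w, rfl, rfl, nf_app_right hnf, hw, hrD⟩)
      · exact absurd hr (not_reach_pv_arr
          ⟨.pv b₁ m₁, by simp, by simp [PTy.fv]⟩)
      · -- s = app (var 0) u, Reach Q (arr E B): Q is a pv free in the context
        subst hA
        rcases hA₂ with ⟨b, m, hh⟩ | ⟨bp, mp, bq, mq, hh⟩
        · cases hh
        · obtain ⟨hP, hQ⟩ : P = .pv bp mp ∧ Q = .pv bq mq := by
            injection hh with h1 h2; exact ⟨h1, h2⟩
          subst hP hQ
          exact absurd hr (not_reach_pv_arr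
            ⟨.arr (.pv bp mp) (.pv bq mq), List.mem_cons_self, by
              simp [PTy.fv]⟩)
  | .lam w, _, hne, D, h => absurd rfl (hne w)

/-- Main lemma: normal terms of atomic type in `[A₂, pv b₁ m₁]` are
`churchBody` terms (or the bare variable `f`). -/
theorem church_main {b₁ : Bool} {m₁ : ℕ} {A₂ : PTy}
    (hA₂ : (∃ b m, A₂ = .pv b m) ∨
      ∃ bp mp bq mq, A₂ = .arr (.pv bp mp) (.pv bq mq)) :
    ∀ (u : Lam), NormalForm u → ∀ (bc : Bool) (mc : ℕ),
      PDer false [A₂, .pv b₁ m₁] u (.pv bc mc) →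
      (∃ n, u = churchBody n) ∨ (u = .var 0 ∧ PTy.pv bc mc = A₂) := by
  intro u
  induction u with
  | lam w ih =>
      intro hnf bc mc h
      obtain ⟨A, B, -, hr⟩ := inv_lam h
      exact absurd hr not_reach_arr_pv
  | var n =>
      intro hnf bc mc h
      rcases neut_two hA₂ (.var n) hnf (by rintro w ⟨⟩) _ h with
        ⟨he, hr⟩ | ⟨he, hr⟩ | ⟨P, Q, u', hA, he, -⟩
      · -- var 0 : Reach A₂ (pv bc mc)
        rcases hA₂ with ⟨b, m, rfl⟩ | ⟨bp, mp, bq, mq, rfl⟩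
        · obtain ⟨rfl, rfl⟩ := reach_pv_pv
            ⟨_, List.mem_cons_self, by simp [PTy.fv]⟩ hr
          exact Or.inr ⟨he, rfl⟩
        · exact absurd hr not_reach_arr_pv
      · obtain ⟨rfl, rfl⟩ := reach_pv_pv ⟨.pv b₁ m₁, by simp, by simp [PTy.fv]⟩ hr
        rw [he]
        exact Or.inl ⟨0, rfl⟩
      · cases he
  | app s w ihs ihw =>
      intro hnf bc mc h
      rcases neut_two hA₂ (.app s w) hnf (by rintro w' ⟨⟩) _ h with
        ⟨he, -⟩ | ⟨he, -⟩ | ⟨P, Q, u', hA, he, hu'nf, hu'der, hr⟩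
      · cases he
      · cases he
      · -- app (var 0) u' with u' : P, Reach Q (pv bc mc)
        obtain ⟨rfl, rfl⟩ : s = .var 0 ∧ u' = w := by
          injection he with h1 h2; exact ⟨h1, h2.symm⟩
        rcases hA₂ with ⟨b, m, hA₂'⟩ | ⟨bp, mp, bq, mq, hA₂'⟩
        · rw [hA₂'] at hA; cases hA
        · rw [hA₂'] at hA
          obtain ⟨hP, hQ⟩ : P = .pv bp mp ∧ Q = .pv bq mq := by
            injection hA with h1 h2; exact ⟨h1.symm, h2.symm⟩
          subst hP
          rcases ihw hu'nf bp mp hu'der with ⟨n, rfl⟩ | ⟨-, habs⟩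
          · exact Or.inl ⟨n + 1, rfl⟩
          · rw [hA₂'] at habs; cases habs

/-! ### The two directions -/

theorem church_body_typed (n : ℕ) :
    PDer false [(PTy.pv false 0).arr (.pv false 0), .pv false 0]
      (churchBody n) (.pv false 0) := by
  induction n with
  | zero => exact PDer.var _ 1 _ (by simp)
  | succ n ih => exact PDer.appE (PDer.var _ 0 _ (by simp)) ih

theorem church_typed (n : ℕ) : PDer false [] (church n) Npty := by
  refine PDer.allI false 0 ?_ (by simp)
  exact PDer.lamI (PDer.lamI (church_body_typed n))

theorem forward {t : Lam} (ht : NormalForm t) (h : PDer false [] t Npty) :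
    ∃ n, t = church n := by
  have h0 : PDer false [] t (.all false 0 ((PTy.pv false 0).arr
      (((PTy.pv false 0).arr (.pv false 0)).arr (.pv false 0)))) := h
  have h2 : PDer false [] t ((PTy.pv false 0).arr
      (((PTy.pv false 0).arr (.pv false 0)).arr (.pv false 0))) := by
    have h3 := PDer.allE (.pv false 0) h0 (by simp)
    have he : PTy.substT false 0 (.pv false 0)
        ((PTy.pv false 0).arr (((PTy.pv false 0).arr (.pv false 0)).arr (.pv false 0)))
        = (PTy.pv false 0).arr
          (((PTy.pv false 0).arr (.pv false 0)).arr (.pv false 0)) := by decide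
    rwa [he] at h3
  cases t with
  | var n => exact absurd h2 (neut_empty _ ht (by rintro w ⟨⟩) _)
  | app s w => exact absurd h2 (neut_empty _ ht (by rintro w' ⟨⟩) _)
  | lam t₁ =>
    obtain ⟨A₁, B₁, ht₁, hr⟩ := inv_lam h2
    obtain ⟨π, L, hπ, hL, hEq⟩ := reach_arr hr
    cases L with
    | cons p L' => exact absurd hEq (by simp [mkAll])
    | nil =>
      obtain ⟨hA1, hB1⟩ : PTy.pv false 0 = applyOps π A₁ ∧
          ((PTy.pv false 0).arr (.pv false 0)).arr (.pv false 0) = applyOps π B₁ := by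
        injection hEq with h1 h2
        exact ⟨h1, h2⟩
      obtain ⟨b₁, m₁, rfl⟩ := pv_of_applyOps_pv hA1.symm
      have hfree1 : ∃ C ∈ [PTy.pv b₁ m₁], C.fv b₁ m₁ :=
        ⟨PTy.pv b₁ m₁, List.mem_singleton_self _, by simp [PTy.fv]⟩
      cases t₁ with
      | var k =>
          obtain ⟨he, hrB⟩ := neut_one _ (nf_lam ht) (by rintro w ⟨⟩) _ ht₁
          obtain ⟨L₂, -, hEq₂⟩ := reach_pv hfree1 hrB
          cases L₂ with
          | nil =>
              rw [hEq₂, show mkAll [] (PTy.pv b₁ m₁) = PTy.pv b₁ m₁ from rfl] at hB1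
              rw [← hA1] at hB1
              cases hB1
          | cons p L₂' =>
              rw [hEq₂] at hB1
              obtain ⟨A', hA'⟩ := applyOps_all π p.1 p.2 (mkAll L₂' (.pv b₁ m₁))
              rw [show mkAll (p :: L₂') (.pv b₁ m₁)
                    = .all p.1 p.2 (mkAll L₂' (.pv b₁ m₁)) from rfl, hA'] at hB1
              cases hB1
      | app s' w' =>
          obtain ⟨he, -⟩ := neut_one _ (nf_lam ht) (by rintro w ⟨⟩) _ ht₁
          cases he
      | lam t₂ =>
          obtain ⟨A₂, B₂, ht₂, hr₂⟩ := inv_lam ht₁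
          obtain ⟨ρ, L₂, hρ, hL₂, hEq₂⟩ := reach_arr hr₂
          cases L₂ with
          | cons p L₂' =>
              rw [hEq₂] at hB1
              obtain ⟨A', hA'⟩ := applyOps_all π p.1 p.2 _
              rw [show mkAll (p :: L₂') (.arr (applyOps ρ A₂) (applyOps ρ B₂))
                    = .all p.1 p.2 (mkAll L₂' (.arr (applyOps ρ A₂) (applyOps ρ B₂)))
                  from rfl, hA'] at hB1
              cases hB1
          | nil =>
              rw [hEq₂, show mkAll [] (.arr (applyOps ρ A₂) (applyOps ρ B₂))
                    = .arr (applyOps ρ A₂) (applyOps ρ B₂) from rfl,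
                  applyOps_arr] at hB1
              obtain ⟨hA2, hB2⟩ : (PTy.pv false 0).arr (.pv false 0)
                    = applyOps π (applyOps ρ A₂) ∧
                  PTy.pv false 0 = applyOps π (applyOps ρ B₂) := by
                injection hB1 with h1 h2
                exact ⟨h1, h2⟩
              obtain ⟨b', m', hb'⟩ := pv_of_applyOps_pv hB2.symm
              obtain ⟨bc, mc, hbc⟩ := pv_of_applyOps_pv hb'
              -- A₂ is a pv or an arrow of pvs
              have hA₂shape : (∃ b m, A₂ = .pv b m) ∨
                  ∃ bp mp bq mq, A₂ = .arr (.pv bp mp) (.pv bq mq) := by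
                cases hA₂' : A₂ with
                | pv b m => exact Or.inl ⟨b, m, rfl⟩
                | all b m A =>
                    obtain ⟨A', hA'⟩ := applyOps_all ρ b m A
                    obtain ⟨A'', hA''⟩ := applyOps_all π b m A'
                    rw [hA₂', hA', hA''] at hA2
                    cases hA2
                | arr P Q =>
                    rw [hA₂', applyOps_arr, applyOps_arr] at hA2
                    obtain ⟨hP, hQ⟩ : PTy.pv false 0 = applyOps π (applyOps ρ P) ∧
                        PTy.pv false 0 = applyOps π (applyOps ρ Q) := by
                      injection hA2 with h1 h2
                      exact ⟨h1, h2⟩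
                    obtain ⟨p1, p2, hp⟩ := pv_of_applyOps_pv hP.symm
                    obtain ⟨p3, p4, hp'⟩ := pv_of_applyOps_pv hp
                    obtain ⟨q1, q2, hq⟩ := pv_of_applyOps_pv hQ.symm
                    obtain ⟨q3, q4, hq'⟩ := pv_of_applyOps_pv hq
                    exact Or.inr ⟨p3, p4, q3, q4, by rw [hp', hq']⟩
              have ht₂' : PDer false [A₂, .pv b₁ m₁] t₂ (.pv bc mc) := by
                rw [hbc] at ht₂
                exact ht₂
              rcases church_main hA₂shape t₂ (nf_lam (nf_lam ht)) bc mc ht₂' with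
                ⟨n, rfl⟩ | ⟨-, hbad⟩
              · exact ⟨n, rfl⟩
              · -- t₂ = var 0 with pv bc mc = A₂ : contradiction via the images
                rw [← hbad] at hA2
                rw [hbc] at hB2
                rw [← hB2] at hA2
                cases hA2

end ChurchAux

/-- A normal λ-term has type `N = ∀X{X, (X→X) → X}` in system F iff it is a
Church numeral. -/
theorem normal_has_type_N_iff_church (t : Lam) (ht : NormalForm t) :
    PDer false [] t Npty ↔ ∃ n : ℕ, t = church n := by
  constructor
  · exact fun h => ChurchAux.forward ht h
  · rintro ⟨n, rfl⟩
    exact ChurchAux.church_typed n
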